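/- Consider the curvature-type tensor on a 6-dimensional real inner product space (V, gₐ) with commuting structures J₁, J (complex structures) and P (involution, P = -J∘J₁), defined by R(X,Y)Z = ((a-1)(a+2)/a²)(X∧Y)Z + (1/a)[(X∧Y)Z + (J₁X∧J₁Y)Z + 2gₐ(X,J₁Y)J₁Z] + ((1-a)/a²)[(X∧Y)Z + (JX∧JY)Z + 2gₐ(X,JY)JZ] + ((1-a)/a)[(X∧Y)PZ + P(X∧Y)Z - ((a+2)/a)P(X∧Y)PZ], where (X∧Y)Z = gₐ(Y,Z)X - gₐ(X,Z)Y. Then R satisfies the symmetries of a Riemann curvature tensor: R(X,Y)Z = -R(Y,X)Z, gₐ(R(X,Y)Z,W) = -gₐ(R(X,Y)W,Z), and the first Bianchi identity R(X,Y)Z + R(Y,Z)X + R(Z,X)Y = 0. -/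
import Mathlib


open scoped RealInnerProductSpace

/-- `(X ∧ Y)Z = gₐ(Y,Z)X - gₐ(X,Z)Y`. -/
noncomputable def wedge {V : Type*} [NormedAddCommGroup V] [InnerProductSpace ℝ V]
    (X Y Z : V) : V := ⟪Y, Z⟫ • X - ⟪X, Z⟫ • Y

theorem stmt9 {V : Type*} [NormedAddCommGroup V] [InnerProductSpace ℝ V]
    [FiniteDimensional ℝ V] (hdim : Module.finrank ℝ V = 6)
    (J₁ J P : V →ₗ[ℝ] V) (a : ℝ) (ha : 0 < a)
    (hJ₁sq : J₁ ∘ₗ J₁ = -LinearMap.id)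
    (hJ₁iso : ∀ x y : V, ⟪J₁ x, J₁ y⟫ = ⟪x, y⟫)
    (hJsq : J ∘ₗ J = -LinearMap.id)
    (hJiso : ∀ x y : V, ⟪J x, J y⟫ = ⟪x, y⟫)
    (hPsq : P ∘ₗ P = LinearMap.id)
    (hPiso : ∀ x y : V, ⟪P x, P y⟫ = ⟪x, y⟫)
    (hPsa : ∀ x y : V, ⟪P x, y⟫ = ⟪x, P y⟫)
    (hP : P = -(J ∘ₗ J₁))
    (hJPJ₁ : J = P ∘ₗ J₁)
    (hcomm : P ∘ₗ J₁ = J₁ ∘ₗ P)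
    (R : V → V → V → V)
    (hR : ∀ X Y Z : V, R X Y Z =
      ((a - 1) * (a + 2) / a ^ 2) • wedge X Y Z
      + (1 / a) • (wedge X Y Z + wedge (J₁ X) (J₁ Y) Z
          + (2 * ⟪X, J₁ Y⟫) • J₁ Z)
      + ((1 - a) / a ^ 2) • (wedge X Y Z + wedge (J X) (J Y) Z
          + (2 * ⟪X, J Y⟫) • J Z)
      + ((1 - a) / a) • (wedge X Y (P Z) + P (wedge X Y Z)
          - ((a + 2) / a) • P (wedge X Y (P Z)))) :
    (∀ X Y Z : V, R X Y Z = -R Y X Z) ∧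
    (∀ X Y Z W : V, ⟪R X Y Z, W⟫ = -⟪R X Y W, Z⟫) ∧
    (∀ X Y Z : V, R X Y Z + R Y Z X + R Z X Y = 0) := by
  have hJ₁sq' : ∀ x : V, J₁ (J₁ x) = -x := fun x => by
    have h := LinearMap.congr_fun hJ₁sq x; simpa using h
  have hJsq' : ∀ x : V, J (J x) = -x := fun x => by
    have h := LinearMap.congr_fun hJsq x; simpa using h
  have hPsq' : ∀ x : V, P (P x) = x := fun x => by
    have h := LinearMap.congr_fun hPsq x; simpa using h
  have sJ₁ : ∀ u v : V, ⟪J₁ u, v⟫ = -⟪u, J₁ v⟫ := fun u v => by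
    have h := hJ₁iso u (J₁ v)
    rw [hJ₁sq' v, inner_neg_right] at h
    linarith
  have sJ : ∀ u v : V, ⟪J u, v⟫ = -⟪u, J v⟫ := fun u v => by
    have h := hJiso u (J v)
    rw [hJsq' v, inner_neg_right] at h
    linarith
  have swapJ₁ : ∀ u v : V, ⟪v, J₁ u⟫ = -⟪u, J₁ v⟫ := fun u v => by
    rw [real_inner_comm, sJ₁]
  have swapJ : ∀ u v : V, ⟪v, J u⟫ = -⟪u, J v⟫ := fun u v => by
    rw [real_inner_comm, sJ]
  have swapP : ∀ u v : V, ⟪v, P u⟫ = ⟪u, P v⟫ := fun u v => by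
    rw [← hPsa, real_inner_comm]
  refine ⟨?_, ?_, ?_⟩
  · intro X Y Z
    rw [hR X Y Z, hR Y X Z]
    simp only [wedge, map_sub, map_smul, swapJ₁ X Y, swapJ X Y]
    module
  · intro X Y Z W
    rw [hR X Y Z, hR X Y W]
    simp only [wedge, map_sub, map_smul, inner_add_left, inner_sub_left,
      real_inner_smul_left, inner_neg_left, inner_neg_right,
      sJ₁, sJ, hPsa, hJ₁sq', hJsq', hPsq']
    simp only [swapJ₁ X Y, swapJ₁ X Z, swapJ₁ X W, swapJ₁ Y Z, swapJ₁ Y W, swapJ₁ Z W,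
      swapJ X Y, swapJ X Z, swapJ X W, swapJ Y Z, swapJ Y W, swapJ Z W,
      swapP X Y, swapP X Z, swapP X W, swapP Y Z, swapP Y W, swapP Z W,
      real_inner_comm Y X, real_inner_comm Z X, real_inner_comm Z Y,
      real_inner_comm W X, real_inner_comm W Y, real_inner_comm W Z]
    ring
  · intro X Y Z
    rw [hR X Y Z, hR Y Z X, hR Z X Y]
    simp only [wedge, map_sub, map_smul, inner_neg_right, sJ₁, sJ, hPsa, hJ₁sq', hJsq', hPsq']
    simp only [swapJ₁ X Y, swapJ₁ X Z, swapJ₁ Y Z,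
      swapJ X Y, swapJ X Z, swapJ Y Z,
      swapP X Y, swapP X Z, swapP Y Z,
      real_inner_comm Y X, real_inner_comm Z X, real_inner_comm Z Y]
    module
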